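/- arXiv:1012.4081 — 4 statements merged into one kernel-verified Lean document; each statement's English description precedes it below -/
import Mathlib

section
/- Let R be a commutative ring, M an R-module, and (M_i)_{i ∈ ℤ} an increasing family of R-submodules of M which is exhaustive, i.e. ⋃_{i ∈ ℤ} M_i = M. Suppose there exists i₀ ∈ ℤ with M_{i₀} = 0 and that for every i > i₀ the quotient module M_i / M_{i-1} is a flat R-module. Then M is a flat R-module. -/
open LinearMap

/-- Extension lemma: if a submodule and the quotient by it are flat, so is the module. -/
theorem flat_of_submodule_quotient_flat {R P : Type*} [CommRing R] [AddCommGroup P]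
    [Module R P] (N : Submodule R P) (hN : Module.Flat R N)
    (hQ : Module.Flat R (P ⧸ N)) : Module.Flat R P := by
  rw [Module.Flat.iff_characterModule_baer] at hN hQ ⊢
  set ι := CharacterModule.dual (R := R) N.mkQ with hιdef
  have hι : Function.Injective ι := by
    intro a b h
    ext x
    obtain ⟨y, rfl⟩ := N.mkQ_surjective x
    exact DFunLike.congr_fun h y
  obtain ⟨r, hr⟩ := hQ.extension_property ι hι LinearMap.id
  set res := CharacterModule.dual (R := R) N.subtype with hresdef
  have hres_ι : ∀ ψ, res (ι ψ) = 0 := by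
    intro ψ
    ext x
    show ψ (N.mkQ x) = 0
    rw [Submodule.mkQ_apply, (Submodule.Quotient.mk_eq_zero N).mpr x.2, map_zero]
  have hr_ι : ∀ ψ, r (ι ψ) = ψ := fun ψ => DFunLike.congr_fun hr ψ
  have hexact : ∀ φ : CharacterModule P, res φ = 0 → ∃ ψ, ι ψ = φ := by
    intro φ hφ
    have h0 : ∀ x ∈ N, φ x = 0 := fun x hx => DFunLike.congr_fun hφ ⟨x, hx⟩
    refine ⟨QuotientAddGroup.lift N.toAddSubgroup φ h0, ?_⟩
    ext x
    rfl
  have hsurj : Function.Surjective res :=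
    CharacterModule.dual_surjective_of_injective _ N.injective_subtype
  have hbij : Function.Bijective (r.prod res) := by
    constructor
    · intro a b hab
      have hz : r.prod res (a - b) = 0 := by rw [map_sub, hab, sub_self]
      have h1 : r (a - b) = 0 := by simpa using congrArg Prod.fst hz
      have h2 : res (a - b) = 0 := by simpa using congrArg Prod.snd hz
      obtain ⟨ψ, hψ⟩ := hexact _ h2
      rw [← hψ, hr_ι] at h1
      rw [← sub_eq_zero, ← hψ, h1, map_zero]
    · rintro ⟨α, β⟩
      obtain ⟨β', hβ'⟩ := hsurj β
      refine ⟨β' + ι (α - r β'), ?_⟩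
      have : r (β' + ι (α - r β')) = α := by
        rw [map_add, hr_ι, add_sub_cancel]
      have h2 : res (β' + ι (α - r β')) = β := by
        rw [map_add, hres_ι, add_zero, hβ']
      exact Prod.ext (by simpa using this) (by simpa using h2)
  let e : CharacterModule P ≃ₗ[R] (CharacterModule (P ⧸ N) × CharacterModule N) :=
    LinearEquiv.ofBijective (r.prod res) hbij
  intro I g
  obtain ⟨G₁, hG₁⟩ := hQ I (LinearMap.fst R _ _ ∘ₗ e.toLinearMap ∘ₗ g)
  obtain ⟨G₂, hG₂⟩ := hN I (LinearMap.snd R _ _ ∘ₗ e.toLinearMap ∘ₗ g)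
  refine ⟨e.symm.toLinearMap ∘ₗ G₁.prod G₂, fun x hx => ?_⟩
  have : G₁.prod G₂ x = e (g ⟨x, hx⟩) := by
    apply Prod.ext
    · simpa using hG₁ x hx
    · simpa using hG₂ x hx
  simp only [LinearMap.comp_apply, this]
  exact e.symm_apply_apply _

open LinearMap TensorProduct

theorem flat_of_iSup_flat {R M : Type*} [CommRing R] [AddCommGroup M] [Module R M]
    (F : ℤ → Submodule R M) (hmono : Monotone F) (hexh : (⨆ i : ℤ, F i) = ⊤)
    (hF : ∀ i, Module.Flat R (F i)) : Module.Flat R M := by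
  rw [Module.Flat.iff_lTensor_injective']
  intro I
  rw [injective_iff_map_eq_zero]
  intro x hx
  -- every element of M ⊗ I comes from some F n ⊗ I
  have key : ∀ x : M ⊗[R] I, ∃ (n : ℤ) (t : (F n) ⊗[R] I),
      LinearMap.rTensor I (F n).subtype t = x := by
    intro x
    induction x with
    | zero => exact ⟨0, 0, map_zero _⟩
    | tmul m a =>
      have hm : m ∈ ⨆ i, F i := hexh ▸ Submodule.mem_top
      obtain ⟨n, hn⟩ := (Submodule.mem_iSup_of_directed F hmono.directed_le).mp hm
      exact ⟨n, ⟨m, hn⟩ ⊗ₜ a, rfl⟩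
    | add y z hy hz =>
      obtain ⟨n, t, ht⟩ := hy
      obtain ⟨n', t', ht'⟩ := hz
      refine ⟨max n n',
        LinearMap.rTensor I (Submodule.inclusion (hmono (le_max_left n n'))) t +
        LinearMap.rTensor I (Submodule.inclusion (hmono (le_max_right n n'))) t', ?_⟩
      rw [map_add, ← LinearMap.rTensor_comp_apply, ← LinearMap.rTensor_comp_apply,
        Submodule.subtype_comp_inclusion, Submodule.subtype_comp_inclusion, ht, ht']
  obtain ⟨n, t, rfl⟩ := key x
  have hnat : LinearMap.lTensor M I.subtype (LinearMap.rTensor I (F n).subtype t)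
      = LinearMap.rTensor R (F n).subtype (LinearMap.lTensor (F n) I.subtype t) := by
    rw [← LinearMap.comp_apply, ← LinearMap.comp_apply,
      LinearMap.lTensor_comp_rTensor, LinearMap.rTensor_comp_lTensor]
  rw [hnat] at hx
  have hinj : Function.Injective (LinearMap.rTensor R (F n).subtype) :=
    Module.Flat.rTensor_preserves_injective_linearMap _ (F n).injective_subtype
  have ht0 : LinearMap.lTensor (F n) I.subtype t = 0 := by
    apply hinj
    rw [hx, map_zero]
  have := Module.Flat.iff_lTensor_injective'.mp (hF n) I
  rw [(injective_iff_map_eq_zero _).mp this t ht0, map_zero]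

/-- Let `R` be a commutative ring, `M` an `R`-module, and `(Mᵢ)_{i ∈ ℤ}` an
increasing exhaustive family of submodules of `M` (`⋃ i, Mᵢ = M`).  If there is some `i₀` with
`M_{i₀} = 0` and the quotient `Mᵢ / M_{i-1}` is flat for every `i > i₀`, then `M` is flat. -/
theorem flat_of_exhaustive_filtration_flat_quotients
    {R : Type*} [CommRing R] {M : Type*} [AddCommGroup M] [Module R M]
    (F : ℤ → Submodule R M) (hmono : Monotone F) (hexh : (⨆ i : ℤ, F i) = ⊤)
    (i₀ : ℤ) (hbot : F i₀ = ⊥)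
    (hflat : ∀ i : ℤ, i₀ < i →
      Module.Flat R ((F i) ⧸ ((F (i - 1)).comap (F i).subtype))) :
    Module.Flat R M := by
  have hbotflat : Module.Flat R (⊥ : Submodule R M) := by
    infer_instance
  have hup : ∀ i : ℤ, i₀ ≤ i → Module.Flat R (F i) := by
    refine Int.le_induction ?_ ?_
    · rw [hbot]; exact hbotflat
    · intro i hi ih
      haveI := ih
      have hq := hflat (i + 1) (by omega)
      rw [show i + 1 - 1 = i from by ring] at hq
      have hNflat : Module.Flat R ((F i).comap (F (i + 1)).subtype) :=
        Module.Flat.of_linearEquiv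
          (Submodule.comapSubtypeEquivOfLe (hmono (by omega)))
      exact flat_of_submodule_quotient_flat _ hNflat hq
  have hall : ∀ i : ℤ, Module.Flat R (F i) := by
    intro i
    rcases le_total i₀ i with h | h
    · exact hup i h
    · have hFi : F i = ⊥ := le_bot_iff.mp (by rw [← hbot]; exact hmono h)
      rw [hFi]
      exact hbotflat
  exact flat_of_iSup_flat F hmono hexh hall
end

section
/- Let R be a commutative ring, M an R-module, and (M_i)_{i ∈ ℤ} an increasing exhaustive family of R-submodules of M (⋃_{i∈ℤ} M_i = M). Suppose there exists i₀ ∈ ℤ with M_{i₀} = 0 and that for every i ∈ ℤ the quotient module M_i / M_{i-1} is a free R-module. Then M is a free R-module. -/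
open Submodule

/-- Auxiliary step: a basis (given as a linearly independent spanning set) of a submodule `N`
can be extended to one of a larger submodule `P` when the quotient `P/N` is free. -/
theorem free_step {R : Type*} [CommRing R] [Nontrivial R] {M : Type*} [AddCommGroup M]
    [Module R M] {N P : Submodule R M} (hNP : N ≤ P)
    (hQ : Module.Free R (P ⧸ N.comap P.subtype))
    (s : Set M) (hsN : s ⊆ N) (hsli : LinearIndependent (ι := s) R Subtype.val)
    (hspan : Submodule.span R s = N) :
    ∃ s' : Set M, s ⊆ s' ∧ s' ⊆ P ∧ LinearIndependent (ι := s') R Subtype.val ∧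
      Submodule.span R s' = P := by
  classical
  set K : Submodule R P := N.comap P.subtype with hK
  letI := hQ
  set b : Module.Basis (Module.Free.ChooseBasisIndex R (P ⧸ K)) R (P ⧸ K) :=
    Module.Free.chooseBasis R (P ⧸ K) with hb
  choose hat hhat using fun j => Submodule.Quotient.mk_surjective K (b j)
  set g : _ → M := fun j => (hat j : M) with hg
  have hker : K ≤ LinearMap.ker (N.mkQ ∘ₗ P.subtype) := by
    intro x hx
    simpa [hK, LinearMap.mem_ker, Submodule.Quotient.mk_eq_zero] using hx
  set φ : (P ⧸ K) →ₗ[R] (M ⧸ N) := K.liftQ (N.mkQ ∘ₗ P.subtype) hker with hφ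
  have hφker : LinearMap.ker φ = ⊥ := by
    apply Submodule.ker_liftQ_eq_bot
    intro x hx
    simpa [hK, LinearMap.mem_ker, Submodule.Quotient.mk_eq_zero] using hx
  have hφb : ∀ j, φ (b j) = Submodule.Quotient.mk (g j) := by
    intro j
    rw [← hhat j]
    rfl
  have hgli : LinearIndependent R (fun j => Submodule.Quotient.mk (p := N) (g j)) := by
    have h1 := b.linearIndependent.map' φ hφker
    convert h1 using 1
    funext j
    exact (hφb j).symm
    all_goals rfl
  have hginj : Function.Injective g := by
    have h2 : Function.Injective (fun j => Submodule.Quotient.mk (p := N) (g j)) :=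
      hgli.injective
    exact fun a b h => h2 (by simp [h])
  set t : Set M := Set.range g with ht
  have htli : LinearIndependent (ι := t) R
      ((Submodule.Quotient.mk (p := N)) ∘ Subtype.val) := by
    rw [← linearIndependent_equiv (Equiv.ofInjective g hginj)]
    exact hgli
  have htP : t ⊆ (P : Set M) := by rintro x ⟨j, rfl⟩; exact (hat j).2
  refine ⟨s ∪ t, Set.subset_union_left, ?_, ?_, ?_⟩
  · exact Set.union_subset (fun x hx => hNP (hsN hx)) htP
  · exact LinearIndepOn.union_id_of_quotient hsN hsli htli
  · apply le_antisymm
    · exact Submodule.span_le.mpr (Set.union_subset (fun x hx => hNP (hsN hx)) htP)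
    · intro x hx
      have hmem : (Submodule.Quotient.mk (⟨x, hx⟩ : P) : P ⧸ K) ∈
          Submodule.span R (Set.range b) := by
        rw [b.span_eq]; trivial
      obtain ⟨c, hc⟩ := Finsupp.mem_span_range_iff_exists_finsupp.1 hmem
      set y : P := c.sum fun j a => a • hat j with hy
      have hmky : (Submodule.Quotient.mk y : P ⧸ K) = Submodule.Quotient.mk (⟨x, hx⟩ : P) := by
        rw [← hc, hy, ← Submodule.mkQ_apply, map_finsuppSum]
        simp only [map_smul, Submodule.mkQ_apply]
        exact Finsupp.sum_congr fun j _ => by rw [hhat j]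
      have hdiff : x - (y : M) ∈ N := by
        have h3 : y - (⟨x, hx⟩ : P) ∈ K := (Submodule.Quotient.eq K).mp hmky
        have h4 : (y : M) - x ∈ N := h3
        simpa [neg_sub] using N.neg_mem h4
      have hyspan : (y : M) ∈ Submodule.span R t := by
        have : (y : M) = c.sum fun j a => a • g j := by
          rw [hy, ← Submodule.subtype_apply, map_finsuppSum]
          simp [hg]
        rw [this]
        exact Submodule.sum_mem _ fun j _ =>
          Submodule.smul_mem _ _ (Submodule.subset_span ⟨j, rfl⟩)
      have hxy : x = (x - (y : M)) + (y : M) := by abel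
      rw [hxy]
      exact Submodule.add_mem _
        (Submodule.span_mono Set.subset_union_left (hspan ▸ hdiff))
        (Submodule.span_mono Set.subset_union_right hyspan)

/-- The ℕ-indexed version: an exhaustive filtration starting at `⊥` with free successive
quotients forces the module to be free. -/
theorem free_of_nat_filtration {R : Type*} [CommRing R] [Nontrivial R] {M : Type*}
    [AddCommGroup M] [Module R M] (G : ℕ → Submodule R M)
    (hexh : (⨆ n : ℕ, G n) = ⊤) (hbot : G 0 = ⊥) (hmono : ∀ n, G n ≤ G (n + 1))
    (hfree : ∀ n, Module.Free R ((G (n+1)) ⧸ ((G n).comap (G (n+1)).subtype))) :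
    Module.Free R M := by
  classical
  have base : (∅ : Set M) ⊆ ↑(G 0) ∧ LinearIndependent (ι := (∅ : Set M)) R Subtype.val ∧
      Submodule.span R (∅ : Set M) = G 0 := by
    refine ⟨Set.empty_subset _, ?_, by rw [Submodule.span_empty, hbot]⟩
    exact linearIndependent_empty R M
  have E : ∀ n (p : {s : Set M // s ⊆ ↑(G n) ∧ LinearIndependent (ι := s) R Subtype.val ∧
      Submodule.span R s = G n}),
      ∃ s' : Set M, p.1 ⊆ s' ∧ s' ⊆ ↑(G (n+1)) ∧ LinearIndependent (ι := s') R Subtype.val ∧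
        Submodule.span R s' = G (n+1) := fun n p =>
    free_step (hmono n) (hfree n) p.1 p.2.1 p.2.2.1 p.2.2.2
  let seq : ∀ n : ℕ, {s : Set M // s ⊆ ↑(G n) ∧ LinearIndependent (ι := s) R Subtype.val ∧
      Submodule.span R s = G n} := fun n =>
    Nat.rec ⟨∅, base⟩ (fun n p => ⟨(E n p).choose, (E n p).choose_spec.2⟩) n
  have hstep : ∀ n, (seq n).1 ⊆ (seq (n+1)).1 := fun n => (E n (seq n)).choose_spec.1
  have hdir : Directed (· ⊆ ·) (fun n => (seq n).1) := by
    have : Monotone (fun n => (seq n).1) := monotone_nat_of_le_succ hstep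
    exact this.directed_le
  set S : Set M := ⋃ n, (seq n).1 with hS
  have hli : LinearIndependent (ι := S) R Subtype.val :=
    linearIndepOn_iUnion_of_directed (v := id) hdir (fun n => (seq n).2.2.1)
  have hsp : Submodule.span R S = ⊤ := by
    rw [hS, Submodule.span_iUnion]
    rw [← hexh]
    exact iSup_congr fun n => (seq n).2.2.2
  exact Module.Free.of_basis (Module.Basis.mk hli (by
    rw [Subtype.range_val, hsp]))

/-- Let `R` be a commutative ring, `M` an `R`-module, and `(Mᵢ)_{i ∈ ℤ}` an
increasing exhaustive family of submodules of `M` (`⋃ i, Mᵢ = M`).  If there is some `i₀` with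
`M_{i₀} = 0` and the quotient `Mᵢ / M_{i-1}` is a free `R`-module for every `i`, then `M` is a
free `R`-module. -/
theorem free_of_exhaustive_filtration_free_quotients
    {R : Type*} [CommRing R] {M : Type*} [AddCommGroup M] [Module R M]
    (F : ℤ → Submodule R M) (hmono : Monotone F) (hexh : (⨆ i : ℤ, F i) = ⊤)
    (i₀ : ℤ) (hbot : F i₀ = ⊥)
    (hfree : ∀ i : ℤ,
      Module.Free R ((F i) ⧸ ((F (i - 1)).comap (F i).subtype))) :
    Module.Free R M := by
  rcases subsingleton_or_nontrivial R with hR | hR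
  · haveI := Module.subsingleton R M
    infer_instance
  set G : ℕ → Submodule R M := fun n => F (i₀ + n) with hG
  have hGexh : (⨆ n : ℕ, G n) = ⊤ := by
    apply le_antisymm le_top
    rw [← hexh]
    apply iSup_le fun i => ?_
    refine le_iSup_of_le (i - i₀).toNat (hmono ?_)
    omega
  have hGbot : G 0 = ⊥ := by show F (i₀ + ((0:ℕ):ℤ)) = ⊥; norm_num [hbot]
  have hGmono : ∀ n, G n ≤ G (n + 1) := fun n => hmono (by push_cast; omega)
  have hGfree : ∀ n, Module.Free R ((G (n+1)) ⧸ ((G n).comap (G (n+1)).subtype)) := by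
    intro n
    have h1 : (i₀ + ((n : ℤ) + 1)) - 1 = i₀ + n := by ring
    have := hfree (i₀ + ((n : ℤ) + 1))
    rw [h1] at this
    have h2 : ((n + 1 : ℕ) : ℤ) = (n : ℤ) + 1 := by push_cast; ring
    show Module.Free R ((F (i₀+((n+1:ℕ):ℤ))) ⧸ ((F (i₀+(n:ℕ))).comap (F (i₀+((n+1:ℕ):ℤ))).subtype))
    rw [h2, ← add_assoc]
    rwa [← add_assoc] at this
  exact free_of_nat_filtration G hGexh hGbot hGmono hGfree
end

section
/- Let R be a commutative Noetherian ring and M a nonzero finitely generated R-module. Define the dimension of a nonzero finitely generated R-module N to be the Krull dimension of R/Ann_R(N), the quotient of R by the annihilator of N (equivalently, the dimension of the support of N). Then the following are equivalent: (i) M is pure, i.e. every nonzero submodule N of M satisfies dim N = dim M; (ii) every associated prime ideal p of M satisfies krullDim(R/p) = dim M. -/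
/-- The dimension of a module: the Krull dimension of the quotient of the base ring by the
annihilator of the module (the dimension of the support). -/
noncomputable def moduleDim (R : Type*) [CommRing R] (N : Type*) [AddCommGroup N]
    [Module R N] : WithBot (WithTop ℕ) :=
  ringKrullDim (R ⧸ Module.annihilator R N)

/-- If `I ≤ J` then the Krull dimension of `R ⧸ J` is at most that of `R ⧸ I`. -/
lemma ringKrullDim_quot_le_quot {R : Type*} [CommRing R] {I J : Ideal R} (h : I ≤ J) :
    ringKrullDim (R ⧸ J) ≤ ringKrullDim (R ⧸ I) :=
  ringKrullDim_le_of_surjective (Ideal.Quotient.factor h)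
    (fun x => Quotient.inductionOn' x fun a => ⟨Ideal.Quotient.mk I a, rfl⟩)

/-- Let `R` be a commutative Noetherian ring and `M` a nonzero finitely
generated `R`-module.  Then `M` is pure (every nonzero submodule of `M` has the same
dimension as `M`) if and only if every associated prime `p` of `M` satisfies
`dim R/p = dim M`. -/
theorem pure_iff_associatedPrimes_dim_eq
    {R : Type*} [CommRing R] [IsNoetherianRing R]
    {M : Type*} [AddCommGroup M] [Module R M] [Module.Finite R M] [Nontrivial M] :
    (∀ N : Submodule R M, N ≠ ⊥ → moduleDim R N = moduleDim R M) ↔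
      (∀ p ∈ associatedPrimes R M, ringKrullDim (R ⧸ p) = moduleDim R M) := by
  constructor
  · intro h p hp
    obtain ⟨hprime, x, hx⟩ := isAssociatedPrime_iff.mp hp
    rw [Submodule.bot_colon'] at hx; subst hx
    have hN : (R ∙ x) ≠ ⊥ := by
      intro hbot
      exact hprime.ne_top (Submodule.annihilator_eq_top_iff.mpr hbot)
    have := h (R ∙ x) hN
    rw [moduleDim] at this
    have hann : Module.annihilator R ↥(R ∙ x) = (R ∙ x).annihilator := rfl
    rw [hann] at this
    exact this
  · intro h N hN
    -- `dim N ≤ dim M` since `Ann M ≤ Ann N`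
    have le1 : moduleDim R N ≤ moduleDim R M :=
      ringKrullDim_quot_le_quot
        (LinearMap.annihilator_le_of_injective N.subtype N.injective_subtype)
    -- `dim M ≤ dim N` via an associated prime of `N`
    have : Nontrivial N := Submodule.nontrivial_iff_ne_bot.mpr hN
    obtain ⟨p, hp⟩ := associatedPrimes.nonempty R ↥N
    have hpM : p ∈ associatedPrimes R M :=
      hp.map_of_injective N.subtype N.injective_subtype
    obtain ⟨hprime, x, hx⟩ := isAssociatedPrime_iff.mp hp
    rw [Submodule.bot_colon'] at hx
    have hle : Module.annihilator R ↥N ≤ p := by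
      rw [hx]
      intro r hr
      rw [Submodule.mem_annihilator_span_singleton]
      exact Module.mem_annihilator.mp hr x
    have le2 : moduleDim R M ≤ moduleDim R N := by
      rw [← h p hpM]
      exact ringKrullDim_quot_le_quot hle
    exact le_antisymm le1 le2
end

section
/- Let k be a commutative ring of prime characteristic p, let k[y_1,…,y_n] be a polynomial ring, and fix an index i with 1 ≤ i ≤ n. Let g ∈ k[y_1,…,y_n], and let b ∈ k[y_1,…,y_n] be a polynomial all of whose monomials have every exponent divisible by p, i.e. b = b'(y_1^p,…,y_n^p) for some polynomial b' (b lies in the image of the expansion-by-p map). If ∂g/∂y_i + b · y_i^{p-1} = 0, then b = 0, and consequently ∂g/∂y_i = 0. -/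
open MvPolynomial Finsupp

lemma my_expand_monomial {R σ : Type*} [CommSemiring R] (p : ℕ) (hp : p ≠ 0)
    (d : σ →₀ ℕ) (r : R) :
    MvPolynomial.expand p (monomial d r) = monomial (p • d) r := by
  rw [expand_monomial, monomial_eq, Finsupp.prod]

lemma my_coeff_expand_eq_zero {R σ : Type*} [CommSemiring R] (p : ℕ) (hp : p ≠ 0)
    (f : MvPolynomial σ R) (m : σ →₀ ℕ) (j : σ) (h : ¬ p ∣ m j) :
    coeff m (MvPolynomial.expand p f) = 0 := by
  classical
  induction f using MvPolynomial.induction_on' with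
  | monomial d r =>
    rw [my_expand_monomial p hp, coeff_monomial]
    split
    · next heq => exact absurd ⟨d j, by rw [← heq, Finsupp.smul_apply, smul_eq_mul]⟩ h
    · rfl
  | add f g hf hg => simp [map_add, coeff_add, hf, hg]

lemma my_coeff_pderiv {R σ : Type*} [CommSemiring R] (i : σ) (m : σ →₀ ℕ)
    (f : MvPolynomial σ R) :
    coeff m (pderiv i f) = (m i + 1) * coeff (m + Finsupp.single i 1) f := by
  classical
  induction f using MvPolynomial.induction_on' with
  | monomial d r =>
    rw [pderiv_monomial, coeff_monomial, coeff_monomial]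
    by_cases hd : d = m + Finsupp.single i 1
    · rw [if_pos hd, if_pos (by simp [hd]), hd]
      simp [mul_comm]
    · rw [if_neg hd]
      by_cases hd2 : d - Finsupp.single i 1 = m
      · rw [if_pos hd2]
        by_cases hdi : d i = 0
        · simp [hdi]
        · exfalso
          apply hd
          rw [← hd2]
          ext j
          by_cases hj : j = i
          · subst hj
            simp [Nat.sub_add_cancel (Nat.one_le_iff_ne_zero.mpr hdi)]
          · simp [Finsupp.single_apply, hj, Ne.symm hj]
      · rw [if_neg hd2, mul_zero]
  | add f g hf hg => simp [map_add, coeff_add, hf, hg, mul_add]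

/-- Let `k` be a commutative ring of prime characteristic `p`, and consider
the polynomial ring `k[y₁, …, yₙ]`.  Let `g` be a polynomial and let `b` be a polynomial all of
whose monomials have every exponent divisible by `p`, i.e. `b` is in the image of the
expansion-by-`p` map.  If `∂g/∂yᵢ + b·yᵢ^{p-1} = 0` then `b = 0` and hence `∂g/∂yᵢ = 0`. -/
theorem pderiv_add_expand_mul_pow_eq_zero
    {k : Type*} [CommRing k] (p : ℕ) [Fact p.Prime] [CharP k p]
    {n : ℕ} (i : Fin n) (g b : MvPolynomial (Fin n) k)
    (hb : b ∈ Set.range (MvPolynomial.expand (R := k) (σ := Fin n) p))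
    (h : pderiv i g + b * (X i) ^ (p - 1) = 0) :
    b = 0 ∧ pderiv i g = 0 := by
  have hp : p ≠ 0 := (Fact.out : p.Prime).ne_zero
  obtain ⟨b', rfl⟩ := hb
  have hb0 : MvPolynomial.expand (R := k) p b' = 0 := by
    ext m
    by_cases hdvd : p ∣ m i
    · -- evaluate the hypothesis at m + single i (p-1)
      set m' : Fin n →₀ ℕ := m + Finsupp.single i (p - 1) with hm'
      have hcoeff := congrArg (coeff m') h
      rw [coeff_add, coeff_zero, my_coeff_pderiv] at hcoeff
      have hXpow : (X i : MvPolynomial (Fin n) k) ^ (p - 1)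
          = monomial (Finsupp.single i (p - 1)) 1 := by
        rw [X_pow_eq_monomial]
      rw [hXpow, coeff_mul_monomial', if_pos (by simp [hm'])] at hcoeff
      have hmi : m' i = m i + (p - 1) := by simp [hm', Finsupp.single_apply]
      have hz : ((m' i : k) + 1) = 0 := by
        have h1 : m' i + 1 = m i + p := by rw [hmi]; omega
        obtain ⟨c, hc⟩ := hdvd
        calc ((m' i : k) + 1) = ((m' i + 1 : ℕ) : k) := by push_cast; ring
          _ = ((m i + p : ℕ) : k) := by rw [h1]
          _ = 0 := by push_cast [hc]; simp [CharP.cast_eq_zero k p]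
      rw [hz, zero_mul, zero_add] at hcoeff
      rw [coeff_zero]
      simpa [hm', add_tsub_cancel_right] using hcoeff
    · rw [my_coeff_expand_eq_zero p hp _ _ _ hdvd, coeff_zero]
  refine ⟨hb0, ?_⟩
  rw [hb0, zero_mul, add_zero] at h
  exact h
end
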